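/- Let λ ∈ ℂ*, α, β ∈ ℂ. Define operators on ℂ[t] by L_{i,0}·t^k = λ^i(t−iα)(t−i)^k and L_{i,1}·t^k = λ^i(α − iαβ + βt)(t−i)^k + kλ^i(t−iα)(t−i)^{k−1} (the last term absent for k = 0). Then [L_{i,0}, L_{j,1}] acting as (j−i)L_{i+j,1} − L_{i+j,0} satisfies [L_{i,0}, L_{j,1}]·t^k = L_{i,0}·L_{j,1}·t^k − L_{j,1}·L_{i,0}·t^k for all i, j ∈ ℤ, k ∈ ℕ. -/
import Mathlib


open Polynomial

/-- if linear operators `L0 i = L_{i,0}` and `L1 i = L_{i,1}` on `ℂ[t]`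
act on monomials by `L_{i,0}·t^k = λ^i(t-iα)(t-i)^k` and
`L_{i,1}·t^k = λ^i(α - iαβ + βt)(t-i)^k + kλ^i(t-iα)(t-i)^{k-1}`,
then `[L_{i,0}, L_{j,1}]·t^k = (j-i)L_{i+j,1}·t^k - L_{i+j,0}·t^k
 = L_{i,0}·L_{j,1}·t^k - L_{j,1}·L_{i,0}·t^k`. -/
theorem stmt_10 (lam α β : ℂ) (hlam : lam ≠ 0)
    (L0 L1 : ℤ → ℂ[X] →ₗ[ℂ] ℂ[X])
    (hL0 : ∀ (i : ℤ) (k : ℕ),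
      L0 i (X ^ k) = C (lam ^ i) * (X - C ((i : ℂ) * α)) * (X - C (i : ℂ)) ^ k)
    (hL1 : ∀ (i : ℤ) (k : ℕ),
      L1 i (X ^ k) = C (lam ^ i) * (C (α - (i : ℂ) * α * β) + C β * X) * (X - C (i : ℂ)) ^ k
        + (k : ℂ) • (C (lam ^ i) * (X - C ((i : ℂ) * α)) * (X - C (i : ℂ)) ^ (k - 1))) :
    ∀ (i j : ℤ) (k : ℕ),
      ((j - i : ℤ) : ℂ) • L1 (i + j) (X ^ k) - L0 (i + j) (X ^ k) =
        L0 i (L1 j (X ^ k)) - L1 j (L0 i (X ^ k)) := by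
  have hL0' : ∀ (i : ℤ) (p : ℂ[X]),
      L0 i p = C (lam ^ i) * (X - C ((i : ℂ) * α)) * p.comp (X - C (i : ℂ)) := by
    intro i p
    induction p using Polynomial.induction_on' with
    | add p q hp hq => rw [map_add, hp, hq, add_comp]; ring
    | monomial n a =>
      rw [← C_mul_X_pow_eq_monomial, show (C a * X ^ n : ℂ[X]) = a • X ^ n by
        rw [smul_eq_C_mul], map_smul, hL0]
      simp only [smul_comp, smul_eq_C_mul, mul_comp, pow_comp, C_comp, X_comp]
      ring
  have hL1' : ∀ (i : ℤ) (p : ℂ[X]),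
      L1 i p = C (lam ^ i) * (C (α - (i : ℂ) * α * β) + C β * X) * p.comp (X - C (i : ℂ))
        + C (lam ^ i) * (X - C ((i : ℂ) * α)) * (derivative p).comp (X - C (i : ℂ)) := by
    intro i p
    induction p using Polynomial.induction_on' with
    | add p q hp hq => rw [map_add, hp, hq, add_comp, map_add, add_comp]; ring
    | monomial n a =>
      rw [← C_mul_X_pow_eq_monomial, show (C a * X ^ n : ℂ[X]) = a • X ^ n by
        rw [smul_eq_C_mul], map_smul, hL1]
      simp only [derivative_smul, derivative_mul, derivative_C, derivative_X_pow, smul_comp,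
        smul_eq_C_mul, mul_comp, pow_comp, C_comp, X_comp, natCast_comp, map_natCast, zero_mul,
        zero_add]
      ring
  intro i j k
  have hpow : lam ^ (i + j) = lam ^ i * lam ^ j := zpow_add₀ hlam i j
  simp only [hL0', hL1']
  simp only [derivative_mul, derivative_pow, derivative_X_pow, derivative_add, derivative_sub,
    derivative_X, derivative_C, derivative_one, add_comp, sub_comp, mul_comp, pow_comp, C_comp,
    X_comp, one_comp, natCast_comp, smul_eq_C_mul, map_natCast, zero_mul, zero_add, mul_one,
    mul_zero, sub_zero, zero_sub, add_zero]
  rcases k with _ | n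
  · simp only [pow_zero, Nat.zero_sub, Nat.cast_zero, map_zero, zero_mul, mul_zero, add_zero,
      mul_one]
    push_cast [hpow, C_add, C_sub, C_mul, C_neg, C_1]
    ring
  · simp only [Nat.add_sub_cancel, pow_succ]
    push_cast [hpow, C_add, C_sub, C_mul, C_neg, C_1]
    ring
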